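/- For every n ≥ 1, the number of 312-avoiding permutations of {1,…,2n} whose up/down pattern is the alternating word DUDU⋯UD (of length 2n−1, starting and ending with D) equals the number of 312-avoiding permutations of {1,…,n}. -/

import Mathlib

/-- A permutation of `{1,…,m}` (as `Equiv.Perm (Fin m)`) is 312-avoiding if there are
no positions `i < j < k` with `π(j) < π(k) < π(i)`. -/
def Avoids312 {m : ℕ} (π : Equiv.Perm (Fin m)) : Prop :=
  ¬ ∃ i j k : Fin m, i < j ∧ j < k ∧ π j < π k ∧ π k < π i

/-- A permutation is alternating (down-up), i.e. its up/down pattern is `DUDU⋯UD`: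
in 0-indexed positions, consecutive entries descend at even positions and ascend at
odd positions, so that `π(1) > π(2) < π(3) > ⋯` in 1-indexed terms. -/
def DownUp {m : ℕ} (π : Equiv.Perm (Fin m)) : Prop :=
  ∀ i j : Fin m, (j : ℕ) = (i : ℕ) + 1 →
    (if Even (i : ℕ) then π j < π i else π i < π j)

namespace Av312x

open Finset Equiv

lemma av_elim {m : ℕ} {π : Equiv.Perm (Fin m)} (h : Avoids312 π) {i j k : Fin m}
    (h1 : i < j) (h2 : j < k) (h3 : π j < π k) (h4 : π k < π i) : False :=
  h ⟨i, j, k, h1, h2, h3, h4⟩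

variable {n : ℕ}

def ev (u : Fin n) : Fin (2 * n) := ⟨2 * u.val, by have := u.isLt; omega⟩
def od (u : Fin n) : Fin (2 * n) := ⟨2 * u.val + 1, by have := u.isLt; omega⟩

lemma ev_lt_ev {u v : Fin n} : ev u < ev v ↔ u < v := by
  rw [Fin.lt_def, Fin.lt_def]; simp only [ev]; omega
lemma card_filter_lt (t : Fin n) : (univ.filter fun j => j < t).card = t := by
  have : (univ.filter fun j => j < t) = Finset.Iio t := by
    ext j; simp
  rw [this, Fin.card_Iio]
lemma card_filter_le (t : Fin n) : (univ.filter fun j => j ≤ t).card = t + 1 := by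
  have : (univ.filter fun j => j ≤ t) = Finset.Iic t := by
    ext j; simp
  rw [this, Fin.card_Iic]

/-- number of earlier, smaller entries -/
def cntE (σ : Perm (Fin n)) (t : Fin n) : ℕ :=
  (univ.filter fun j => j < t ∧ σ j < σ t).card

def Eval (σ : Perm (Fin n)) (t : Fin n) : ℕ := (σ t : ℕ) + cntE σ t

def Msup (σ : Perm (Fin n)) (t : Fin n) : ℕ := (Finset.Iic t).sup fun j => (σ j : ℕ)

def Oval (σ : Perm (Fin n)) (t : Fin n) : ℕ := (t : ℕ) + 1 + Msup σ t

lemma cntE_le (σ : Perm (Fin n)) (t : Fin n) : cntE σ t ≤ (t : ℕ) := by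
  have h : (univ.filter fun j => j < t ∧ σ j < σ t) ⊆ (univ.filter fun j => j < t) := by
    intro x hx; simp only [mem_filter] at *; tauto
  have := Finset.card_le_card h
  rwa [card_filter_lt] at this

lemma le_Msup (σ : Perm (Fin n)) {j t : Fin n} (h : j ≤ t) : (σ j : ℕ) ≤ Msup σ t :=
  Finset.le_sup (f := fun j => (σ j : ℕ)) (by simpa using h)

lemma Msup_lt_n (σ : Perm (Fin n)) (t : Fin n) : Msup σ t < n := by
  have hne : t ∈ Finset.Iic t := by simp
  obtain ⟨b, _, hb⟩ := Finset.exists_mem_eq_sup (Finset.Iic t) ⟨t, hne⟩ (fun j => (σ j : ℕ))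
  rw [Msup, hb]; exact (σ b).isLt

lemma Eval_lt_2n (σ : Perm (Fin n)) (t : Fin n) : Eval σ t < 2 * n := by
  have h1 := cntE_le σ t
  have h2 := (σ t).isLt
  have h3 := t.isLt
  simp only [Eval]; omega

lemma Oval_lt_2n (σ : Perm (Fin n)) (t : Fin n) : Oval σ t < 2 * n := by
  have h1 := Msup_lt_n σ t
  have h3 := t.isLt
  simp only [Oval]; omega

def EvalF (σ : Perm (Fin n)) (t : Fin n) : Fin (2 * n) := ⟨Eval σ t, Eval_lt_2n σ t⟩
def OvalF (σ : Perm (Fin n)) (t : Fin n) : Fin (2 * n) := ⟨Oval σ t, Oval_lt_2n σ t⟩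

def Ff (σ : Perm (Fin n)) (p : Fin (2 * n)) : Fin (2 * n) :=
  if p.val % 2 = 0 then OvalF σ ⟨p.val / 2, by have := p.isLt; omega⟩
  else EvalF σ ⟨p.val / 2, by have := p.isLt; omega⟩

lemma Ff_ev (σ : Perm (Fin n)) (u : Fin n) : Ff σ (ev u) = OvalF σ u := by
  have h1 : (ev u).val % 2 = 0 := by simp only [ev]; omega
  rw [Ff, if_pos h1]
  congr 1
  apply Fin.ext
  simp only [ev]; omega

lemma Ff_od (σ : Perm (Fin n)) (u : Fin n) : Ff σ (od u) = EvalF σ u := by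
  have h1 : ¬ (od u).val % 2 = 0 := by simp only [od]; omega
  rw [Ff, if_neg h1]
  congr 1
  apply Fin.ext
  simp only [od]; omega


variable {σ : Equiv.Perm (Fin n)}

lemma Eval_lt_of_lt {t u : Fin n} (htu : t < u) (h : σ t < σ u) :
    Eval σ t < Eval σ u := by
  have hc : cntE σ t < cntE σ u := by
    apply Finset.card_lt_card
    constructor
    · intro j hj
      simp only [mem_filter, mem_univ, true_and] at *
      exact ⟨hj.1.trans htu, hj.2.trans h⟩
    · intro hsub
      have ht : t ∈ univ.filter fun j => j < u ∧ σ j < σ u := by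
        simp only [mem_filter, mem_univ, true_and]; exact ⟨htu, h⟩
      have := hsub ht
      simp only [mem_filter, mem_univ, true_and] at this
      exact absurd this.1 (lt_irrefl t)
  have hv : (σ t : ℕ) < (σ u : ℕ) := h
  simp only [Eval]; omega

lemma Eval_gt_of_gt (hσ : Avoids312 σ) {t u : Fin n} (htu : t < u) (h : σ u < σ t) :
    Eval σ u < Eval σ t := by
  have hc : cntE σ u ≤ cntE σ t := by
    apply Finset.card_le_card
    intro j hj
    simp only [mem_filter, mem_univ, true_and] at *
    refine ⟨?_, hj.2.trans h⟩
    by_contra hjt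
    push_neg at hjt
    rcases lt_or_eq_of_le hjt with hlt | heq
    · exact av_elim hσ hlt hj.1 hj.2 h
    · rw [heq] at h; exact absurd (h.trans hj.2) (lt_irrefl _)
  have hv : (σ u : ℕ) < (σ t : ℕ) := h
  simp only [Eval]; omega

lemma Eval_lt_iff (hσ : Avoids312 σ) {t u : Fin n} : Eval σ t < Eval σ u ↔ σ t < σ u := by
  constructor
  · intro h
    rcases lt_trichotomy (σ t) (σ u) with h1 | h1 | h1
    · exact h1
    · exact absurd h (by rw [σ.injective h1]; exact lt_irrefl _)
    · exfalso
      rcases lt_trichotomy t u with h2 | h2 | h2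
      · exact absurd h (not_lt.mpr (le_of_lt (Eval_gt_of_gt hσ h2 h1)))
      · rw [h2] at h; exact absurd h (lt_irrefl _)
      · exact absurd h (not_lt.mpr (le_of_lt (Eval_lt_of_lt h2 h1)))
  · intro h
    rcases lt_trichotomy t u with h2 | h2 | h2
    · exact Eval_lt_of_lt h2 h
    · rw [h2] at h; exact absurd h (lt_irrefl _)
    · exact Eval_gt_of_gt hσ h2 h

lemma Msup_mono {t u : Fin n} (h : t ≤ u) : Msup σ t ≤ Msup σ u :=
  Finset.sup_mono (Finset.Iic_subset_Iic.mpr h)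

lemma Oval_lt_of_lt {t u : Fin n} (htu : t < u) : Oval σ t < Oval σ u := by
  have h1 : Msup σ t ≤ Msup σ u := Msup_mono (le_of_lt htu)
  have h2 : (t : ℕ) < (u : ℕ) := htu
  simp only [Oval]; omega

lemma Eval_lt_Oval {t u : Fin n} (h : t ≤ u) : Eval σ t < Oval σ u := by
  have h1 : (σ t : ℕ) ≤ Msup σ u := le_Msup σ h
  have h2 : cntE σ t ≤ (t : ℕ) := cntE_le σ t
  have h3 : (t : ℕ) ≤ (u : ℕ) := h
  simp only [Eval, Oval]; omega

lemma Oval_lt_Eval (hσ : Avoids312 σ) {t u : Fin n} (htu : t < u)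
    (h : ∀ j, j ≤ t → σ j < σ u) : Oval σ t < Eval σ u := by
  have hc : (t : ℕ) + 1 ≤ cntE σ u := by
    rw [← card_filter_le t]
    apply Finset.card_le_card
    intro j hj
    simp only [mem_filter, mem_univ, true_and] at *
    exact ⟨lt_of_le_of_lt hj htu, h j hj⟩
  have hs : Msup σ t < (σ u : ℕ) := by
    have hne : t ∈ Finset.Iic t := by simp
    obtain ⟨b, hb, hbs⟩ := Finset.exists_mem_eq_sup (Finset.Iic t) ⟨t, hne⟩ (fun j => (σ j : ℕ))
    rw [Msup, hbs]
    exact h b (by simpa using hb)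
  simp only [Eval, Oval]; omega

lemma Eval_lt_Oval' (hσ : Avoids312 σ) {t u m : Fin n} (htu : t < u) (hm : m ≤ t)
    (h : σ u < σ m) : Eval σ u < Oval σ t := by
  have hc : cntE σ u ≤ (m : ℕ) := by
    rw [← card_filter_lt m]
    apply Finset.card_le_card
    intro j hj
    simp only [mem_filter, mem_univ, true_and] at *
    by_contra hjm
    push_neg at hjm
    rcases lt_or_eq_of_le hjm with hlt | heq
    · exact av_elim hσ hlt hj.1 hj.2 h
    · rw [heq] at h
      exact absurd (h.trans hj.2) (lt_irrefl _)
  have hσu : (σ u : ℕ) < (σ m : ℕ) := h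
  have hms : (σ m : ℕ) ≤ Msup σ t := le_Msup σ hm
  have hmt : (m : ℕ) ≤ (t : ℕ) := hm
  simp only [Eval, Oval]; omega

lemma Eval_ne_Oval (hσ : Avoids312 σ) (t u : Fin n) : Eval σ u ≠ Oval σ t := by
  rcases le_or_gt u t with h | h
  · exact ne_of_lt (Eval_lt_Oval h)
  · have hne : t ∈ Finset.Iic t := by simp
    obtain ⟨m, hm, hms⟩ := Finset.exists_mem_eq_sup (Finset.Iic t) ⟨t, hne⟩ (fun j => (σ j : ℕ))
    simp only [Finset.mem_Iic] at hm
    rcases lt_trichotomy (σ u) (σ m) with h1 | h1 | h1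
    · exact ne_of_lt (Eval_lt_Oval' hσ h hm h1)
    · exact absurd (σ.injective h1) (by intro he; rw [he] at h; exact absurd (hm.trans_lt h) (lt_irrefl _))
    · apply ne_of_gt
      apply Oval_lt_Eval hσ h
      intro j hj
      have h2 : (σ j : ℕ) ≤ Msup σ t := le_Msup σ hj
      simp only [Msup] at h2
      rw [hms] at h2
      have h3 : (σ m : ℕ) < (σ u : ℕ) := h1
      exact Fin.lt_def.mpr (lt_of_le_of_lt h2 h3)


lemma ev_or_od (p : Fin (2 * n)) : (∃ t, p = ev t) ∨ (∃ t, p = od t) := by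
  rcases Nat.even_or_odd p.val with ⟨r, hr⟩ | ⟨r, hr⟩
  · have hr' : r < n := by have := p.isLt; omega
    exact Or.inl ⟨⟨r, hr'⟩, Fin.ext (by simp only [ev]; omega)⟩
  · have hr' : r < n := by have := p.isLt; omega
    exact Or.inr ⟨⟨r, hr'⟩, Fin.ext (by simp only [od]; omega)⟩

lemma Oval_injective {t u : Fin n} (h : Oval σ t = Oval σ u) : t = u := by
  rcases lt_trichotomy t u with h1 | h1 | h1
  · exact absurd h (ne_of_lt (Oval_lt_of_lt h1))
  · exact h1
  · exact absurd h (ne_of_gt (Oval_lt_of_lt h1))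

lemma Eval_injective (hσ : Avoids312 σ) {t u : Fin n} (h : Eval σ t = Eval σ u) : t = u := by
  rcases lt_trichotomy (σ t) (σ u) with h1 | h1 | h1
  · exact absurd h (ne_of_lt ((Eval_lt_iff hσ).mpr h1))
  · exact σ.injective h1
  · exact absurd h (ne_of_gt ((Eval_lt_iff hσ).mpr h1))

lemma Ff_injective (hσ : Avoids312 σ) : Function.Injective (Ff σ) := by
  intro p q hpq
  rcases ev_or_od p with ⟨t, rfl⟩ | ⟨t, rfl⟩ <;> rcases ev_or_od q with ⟨u, rfl⟩ | ⟨u, rfl⟩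
  · rw [Ff_ev, Ff_ev] at hpq
    rw [Oval_injective (congrArg Fin.val hpq : Oval σ t = Oval σ u)]
  · rw [Ff_ev, Ff_od] at hpq
    exact absurd (congrArg Fin.val hpq).symm (Eval_ne_Oval hσ t u)
  · rw [Ff_od, Ff_ev] at hpq
    exact absurd (congrArg Fin.val hpq) (Eval_ne_Oval hσ u t)
  · rw [Ff_od, Ff_od] at hpq
    rw [Eval_injective hσ (congrArg Fin.val hpq : Eval σ t = Eval σ u)]

noncomputable def Pi (σ : Perm (Fin n)) (hσ : Avoids312 σ) : Perm (Fin (2 * n)) :=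
  Equiv.ofBijective (Ff σ) ((Finite.injective_iff_bijective).mp (Ff_injective hσ))

lemma Pi_ev (hσ : Avoids312 σ) (u : Fin n) : Pi σ hσ (ev u) = OvalF σ u := Ff_ev σ u
lemma Pi_od (hσ : Avoids312 σ) (u : Fin n) : Pi σ hσ (od u) = EvalF σ u := Ff_od σ u

lemma Pi_downUp (hσ : Avoids312 σ) : DownUp (Pi σ hσ) := by
  intro i j hij
  rcases Nat.even_or_odd (i : ℕ) with ⟨r, hr⟩ | ⟨r, hr⟩
  · have hrn : r < n := by have := i.isLt; omega
    have hi : i = ev ⟨r, hrn⟩ := Fin.ext (by simp only [ev]; omega)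
    have hj : j = od ⟨r, hrn⟩ := Fin.ext (by simp only [od]; omega)
    rw [if_pos ⟨r, hr⟩, hi, hj, Pi_ev, Pi_od]
    exact Fin.mk_lt_mk.mpr (Eval_lt_Oval (le_refl _))
  · have hrn : r < n := by have := i.isLt; omega
    have hrn' : r + 1 < n := by have := j.isLt; omega
    have hi : i = od ⟨r, hrn⟩ := Fin.ext (by simp only [od]; omega)
    have hj : j = ev ⟨r + 1, hrn'⟩ := Fin.ext (by simp only [ev]; omega)
    rw [if_neg (by simp only [Nat.even_iff]; omega), hi, hj, Pi_ev, Pi_od]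
    exact Fin.mk_lt_mk.mpr (Eval_lt_Oval (Fin.mk_le_mk.mpr (by omega)))

lemma Pi_avoids (hσ : Avoids312 σ) : Avoids312 (Pi σ hσ) := by
  rintro ⟨a, b, c, hab, hbc, h1, h2⟩
  rcases ev_or_od a with ⟨s, rfl⟩ | ⟨s, rfl⟩
  · rcases ev_or_od b with ⟨j, rfl⟩ | ⟨j, rfl⟩
    · -- a = ev s, b = ev j : π b < π a impossible since s < j
      have hsj : s < j := by rw [Fin.lt_def] at hab ⊢; simp only [ev] at hab; omega
      have hlt : Pi σ hσ (ev j) < Pi σ hσ (ev s) := h1.trans h2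
      rw [Pi_ev, Pi_ev] at hlt
      exact absurd (Fin.mk_lt_mk.mp hlt) (not_lt.mpr (le_of_lt (Oval_lt_of_lt hsj)))
    · have hsj : s ≤ j := by rw [Fin.lt_def] at hab; rw [Fin.le_def]; simp only [ev, od] at hab ⊢; omega
      rcases ev_or_od c with ⟨k, rfl⟩ | ⟨k, rfl⟩
      · -- c = ev k : π c < π a impossible since s < k
        have hjk : j < k := by rw [Fin.lt_def] at hbc ⊢; simp only [ev, od] at hbc; omega
        rw [Pi_ev, Pi_ev] at h2
        exact absurd (Fin.mk_lt_mk.mp h2)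
          (not_lt.mpr (le_of_lt (Oval_lt_of_lt (lt_of_le_of_lt hsj hjk))))
      · -- main case : Eval j < Eval k < Oval s
        have hjk : j < k := by rw [Fin.lt_def] at hbc ⊢; simp only [od] at hbc; omega
        rw [Pi_od, Pi_od] at h1
        rw [Pi_od, Pi_ev] at h2
        have h1' : Eval σ j < Eval σ k := Fin.mk_lt_mk.mp h1
        have h2' : Eval σ k < Oval σ s := Fin.mk_lt_mk.mp h2
        have hne : s ∈ Finset.Iic s := by simp
        obtain ⟨m, hm, hms⟩ :=
          Finset.exists_mem_eq_sup (Finset.Iic s) ⟨s, hne⟩ (fun i => (σ i : ℕ))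
        simp only [Finset.mem_Iic] at hm
        have hsk : s < k := lt_of_le_of_lt hsj hjk
        rcases lt_trichotomy (σ k) (σ m) with ht | ht | ht
        · have hjσ : σ j < σ k := (Eval_lt_iff hσ).mp h1'
          have hmj : m < j := by
            rcases lt_or_eq_of_le (hm.trans hsj) with h' | h'
            · exact h'
            · exact absurd (h' ▸ ht) (not_lt.mpr (le_of_lt hjσ))
          exact av_elim hσ hmj hjk hjσ ht
        · have : k = m := σ.injective ht
          rw [this] at hsk
          exact absurd (hm.trans_lt hsk) (lt_irrefl _)
        · refine absurd h2' (not_lt.mpr (le_of_lt (Oval_lt_Eval hσ hsk ?_)))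
          intro i hi
          have hle : (σ i : ℕ) ≤ Msup σ s := le_Msup σ hi
          simp only [Msup] at hle
          rw [hms] at hle
          exact Fin.lt_def.mpr (lt_of_le_of_lt hle ht)
  · rcases ev_or_od b with ⟨j, rfl⟩ | ⟨j, rfl⟩
    · -- b = ev j with s < j : π b < π a = Eval s impossible
      have hsj : s < j := by rw [Fin.lt_def] at hab ⊢; simp only [ev, od] at hab; omega
      have hlt : Pi σ hσ (ev j) < Pi σ hσ (od s) := h1.trans h2
      rw [Pi_ev, Pi_od] at hlt
      exact absurd (Fin.mk_lt_mk.mp hlt)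
        (not_lt.mpr (le_of_lt (Eval_lt_Oval (le_of_lt hsj))))
    · have hsj : s < j := by rw [Fin.lt_def] at hab ⊢; simp only [od] at hab; omega
      rcases ev_or_od c with ⟨k, rfl⟩ | ⟨k, rfl⟩
      · have hjk : j < k := by rw [Fin.lt_def] at hbc ⊢; simp only [ev, od] at hbc; omega
        rw [Pi_ev, Pi_od] at h2
        exact absurd (Fin.mk_lt_mk.mp h2)
          (not_lt.mpr (le_of_lt (Eval_lt_Oval (le_of_lt (hsj.trans hjk)))))
      · have hjk : j < k := by rw [Fin.lt_def] at hbc ⊢; simp only [od] at hbc; omega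
        rw [Pi_od, Pi_od] at h1
        rw [Pi_od, Pi_od] at h2
        exact av_elim hσ hsj hjk ((Eval_lt_iff hσ).mp (Fin.mk_lt_mk.mp h1))
          ((Eval_lt_iff hσ).mp (Fin.mk_lt_mk.mp h2))


/-! ### Generic helpers -/

lemma perm_eq_of_order_iso (σ σ' : Perm (Fin n))
    (h : ∀ t u, σ t < σ u ↔ σ' t < σ' u) : σ = σ' := by
  have hmono : StrictMono (fun x => σ' (σ.symm x)) := by
    intro a b hab
    apply (h (σ.symm a) (σ.symm b)).mp
    rwa [σ.apply_symm_apply, σ.apply_symm_apply]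
  have hrange : Set.range (fun x => σ' (σ.symm x)) = Set.range (id : Fin n → Fin n) := by
    rw [Set.range_id]
    exact (σ'.surjective.comp σ.symm.surjective).range_eq
  have hid := (hmono.range_inj strictMono_id).mp hrange
  apply Equiv.ext
  intro x
  have := congrFun hid (σ x)
  simp only [σ.symm_apply_apply, id] at this
  exact this.symm

lemma strictMono_adj {α : Type*} [Preorder α] {f : Fin n → α}
    (h : ∀ (i : ℕ) (hi : i + 1 < n), f ⟨i, Nat.lt_of_succ_lt hi⟩ < f ⟨i + 1, hi⟩) :
    StrictMono f := by
  have key : ∀ (k : ℕ) (a b : Fin n), (b : ℕ) = (a : ℕ) + (k + 1) → f a < f b := by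
    intro k
    induction k with
    | zero =>
      intro a b hb
      have hlt : (a : ℕ) + 1 < n := hb ▸ b.isLt
      have hb' : b = ⟨(a : ℕ) + 1, hlt⟩ := Fin.ext hb
      rw [hb']
      exact h a.val hlt
    | succ k ih =>
      intro a b hb
      have hcn : (a : ℕ) + (k + 1) < n := by have := b.isLt; omega
      have h1 : f a < f ⟨(a : ℕ) + (k + 1), hcn⟩ := ih a _ rfl
      have hlt : (a : ℕ) + (k + 1) + 1 < n := by have := b.isLt; omega
      have hb' : b = ⟨(a : ℕ) + (k + 1) + 1, hlt⟩ := Fin.ext (show (b:ℕ) = (a : ℕ) + (k + 1) + 1 by omega)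
      refine h1.trans ?_
      rw [hb']
      exact h ((a : ℕ) + (k + 1)) hlt
  intro a b hab
  have hab' : (a : ℕ) < (b : ℕ) := hab
  exact key ((b : ℕ) - (a : ℕ) - 1) a b (by omega)

lemma card_lt_val {m : ℕ} (π : Perm (Fin m)) (v : Fin m) :
    (univ.filter fun p => π p < v).card = (v : ℕ) := by
  have himg : (univ.filter fun p => π p < v).image π = univ.filter fun w => w < v := by
    ext w
    simp only [Finset.mem_image, mem_filter, mem_univ, true_and]
    constructor
    · rintro ⟨p, hp, rfl⟩; exact hp
    · intro hw; exact ⟨π.symm w, by rwa [π.apply_symm_apply], π.apply_symm_apply w⟩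
  rw [← Finset.card_image_of_injective _ π.injective, himg, card_filter_lt]

lemma card_le_val {m : ℕ} (π : Perm (Fin m)) (v : Fin m) :
    (univ.filter fun p => π p ≤ v).card = (v : ℕ) + 1 := by
  have himg : (univ.filter fun p => π p ≤ v).image π = univ.filter fun w => w ≤ v := by
    ext w
    simp only [Finset.mem_image, mem_filter, mem_univ, true_and]
    constructor
    · rintro ⟨p, hp, rfl⟩; exact hp
    · intro hw; exact ⟨π.symm w, by rwa [π.apply_symm_apply], π.apply_symm_apply w⟩
  rw [← Finset.card_image_of_injective _ π.injective, himg, card_filter_le]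

lemma ev_injective : Function.Injective (ev (n := n)) := by
  intro a b h
  have := congrArg Fin.val h
  simp only [ev] at this
  exact Fin.ext (by omega)

lemma od_injective : Function.Injective (od (n := n)) := by
  intro a b h
  have := congrArg Fin.val h
  simp only [od] at this
  exact Fin.ext (by omega)

lemma card_split (P : Fin (2 * n) → Prop) [DecidablePred P] :
    (univ.filter P).card =
      (univ.filter fun u : Fin n => P (ev u)).card +
        (univ.filter fun u : Fin n => P (od u)).card := by
  have hun : univ.filter P =
      ((univ.filter fun u => P (ev u)).image ev) ∪ ((univ.filter fun u => P (od u)).image od) := by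
    ext p
    simp only [mem_filter, mem_union, Finset.mem_image, mem_univ, true_and]
    constructor
    · intro hp
      rcases ev_or_od p with ⟨t, rfl⟩ | ⟨t, rfl⟩
      · exact Or.inl ⟨t, hp, rfl⟩
      · exact Or.inr ⟨t, hp, rfl⟩
    · rintro (⟨u, hu, rfl⟩ | ⟨u, hu, rfl⟩) <;> exact hu
  have hdisj : Disjoint ((univ.filter fun u => P (ev u)).image ev)
      ((univ.filter fun u => P (od u)).image od) := by
    rw [Finset.disjoint_left]
    intro p hp hq
    simp only [Finset.mem_image, mem_filter, mem_univ, true_and] at hp hq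
    obtain ⟨a, _, ha⟩ := hp
    obtain ⟨b, _, hb⟩ := hq
    rw [← hb] at ha
    have := congrArg Fin.val ha
    simp only [ev, od] at this
    omega
  rw [hun, Finset.card_union_of_disjoint hdisj,
    Finset.card_image_of_injective _ ev_injective, Finset.card_image_of_injective _ od_injective]

/-! ### The bridging lemma : Msup in terms of later smaller entries -/

lemma Msup_eq (hσ : Avoids312 σ) (t : Fin n) :
    Msup σ t = (t : ℕ) + (univ.filter fun u => t < u ∧ σ u < σ t).card := by
  have hne : t ∈ Finset.Iic t := by simp
  obtain ⟨m, hm, hms⟩ := Finset.exists_mem_eq_sup (Finset.Iic t) ⟨t, hne⟩ (fun j => (σ j : ℕ))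
  simp only [Finset.mem_Iic] at hm
  have hA : (univ.filter fun u => σ u ≤ σ m).card = (σ m : ℕ) + 1 := card_le_val σ (σ m)
  have hsplit : (univ.filter fun u => σ u ≤ σ m) =
      (univ.filter fun u => u ≤ t) ∪ (univ.filter fun u => t < u ∧ σ u < σ t) := by
    ext u
    simp only [mem_filter, mem_union, mem_univ, true_and]
    constructor
    · intro hu
      rcases le_or_gt u t with h1 | h1
      · exact Or.inl h1
      · refine Or.inr ⟨h1, ?_⟩
        have hum : u ≠ m := fun he => absurd (he ▸ h1) (not_lt.mpr hm)
        have hlt : σ u < σ m := lt_of_le_of_ne hu (fun he => hum (σ.injective he))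
        rcases lt_trichotomy (σ u) (σ t) with h2 | h2 | h2
        · exact h2
        · exact absurd (σ.injective h2) (fun he => absurd (he ▸ h1) (lt_irrefl _))
        · exfalso
          have hmt : m ≠ t := by
            intro he
            rw [he] at hlt
            exact absurd (h2.trans hlt) (lt_irrefl _)
          exact av_elim hσ (lt_of_le_of_ne hm hmt) h1 h2 hlt
    · rintro (h1 | ⟨h1, h2⟩)
      · have : (σ u : ℕ) ≤ Msup σ t := le_Msup σ h1
        simp only [Msup] at this
        rw [hms] at this
        exact Fin.le_def.mpr this
      · have h3 : (σ t : ℕ) ≤ Msup σ t := le_Msup σ (le_refl t)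
        simp only [Msup] at h3
        rw [hms] at h3
        exact le_of_lt (lt_of_lt_of_le h2 (Fin.le_def.mpr h3))
  have hdisj : Disjoint (univ.filter fun u : Fin n => u ≤ t)
      (univ.filter fun u : Fin n => t < u ∧ σ u < σ t) := by
    rw [Finset.disjoint_left]
    intro u hu1 hu2
    simp only [mem_filter, mem_univ, true_and] at hu1 hu2
    exact absurd (lt_of_le_of_lt hu1 hu2.1) (lt_irrefl u)
  rw [hsplit, Finset.card_union_of_disjoint hdisj, card_filter_le] at hA
  have hMs : Msup σ t = (σ m : ℕ) := hms
  omega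


/-! ### From a down-up 312-avoiding permutation back to a short permutation -/

section Inverse

variable (π : Perm (Fin (2 * n)))

def gcnt (t : Fin n) : ℕ := (univ.filter fun u => π (od u) < π (od t)).card

lemma gcnt_lt_n (t : Fin n) : gcnt π t < n := by
  have hsub : (univ.filter fun u => π (od u) < π (od t)) ⊆ univ.erase t := by
    intro u hu
    simp only [mem_filter, mem_univ, true_and] at hu
    rw [Finset.mem_erase]
    exact ⟨fun he => absurd (he ▸ hu) (lt_irrefl _), mem_univ u⟩
  have hcard := Finset.card_le_card hsub
  rw [Finset.card_erase_of_mem (mem_univ t), Finset.card_univ, Fintype.card_fin] at hcard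
  have hn : 0 < n := t.pos
  unfold gcnt
  omega

lemma gcnt_lt_of_lt {t u : Fin n} (h : π (od t) < π (od u)) : gcnt π t < gcnt π u := by
  apply Finset.card_lt_card
  constructor
  · intro w hw
    simp only [mem_filter, mem_univ, true_and] at *
    exact hw.trans h
  · intro hsub
    have ht : t ∈ univ.filter fun w => π (od w) < π (od u) := by
      simp only [mem_filter, mem_univ, true_and]; exact h
    have := hsub ht
    simp only [mem_filter, mem_univ, true_and] at this
    exact absurd this (lt_irrefl _)

lemma gcnt_lt_iff {t u : Fin n} : gcnt π t < gcnt π u ↔ π (od t) < π (od u) := by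
  constructor
  · intro h
    rcases lt_trichotomy (π (od t)) (π (od u)) with h1 | h1 | h1
    · exact h1
    · rw [od_injective (π.injective h1)] at h; exact absurd h (lt_irrefl _)
    · exact absurd h (not_lt.mpr (le_of_lt (gcnt_lt_of_lt π h1)))
  · exact gcnt_lt_of_lt π

lemma gcnt_injective : Function.Injective (fun t => (⟨gcnt π t, gcnt_lt_n π t⟩ : Fin n)) := by
  intro t u h
  simp only [Fin.mk.injEq] at h
  rcases lt_trichotomy (π (od t)) (π (od u)) with h1 | h1 | h1
  · exact absurd h (ne_of_lt ((gcnt_lt_iff π).mpr h1))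
  · exact od_injective (π.injective h1)
  · exact absurd h (ne_of_gt ((gcnt_lt_iff π).mpr h1))

noncomputable def sigma0 : Perm (Fin n) :=
  Equiv.ofBijective _ ((Finite.injective_iff_bijective).mp (gcnt_injective π))

lemma sigma0_val (t : Fin n) : (sigma0 π t : ℕ) = gcnt π t := rfl

lemma sigma0_lt_iff {t u : Fin n} : sigma0 π t < sigma0 π u ↔ π (od t) < π (od u) := by
  rw [Fin.lt_def, sigma0_val, sigma0_val]
  exact gcnt_lt_iff π

lemma sigma0_avoids (hav : Avoids312 π) : Avoids312 (sigma0 π) := by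
  rintro ⟨i, j, k, hij, hjk, h1, h2⟩
  have pij : od i < od j := by rw [Fin.lt_def] at hij ⊢; simp only [od]; omega
  have pjk : od j < od k := by rw [Fin.lt_def] at hjk ⊢; simp only [od]; omega
  exact av_elim hav pij pjk ((sigma0_lt_iff π).mp h1) ((sigma0_lt_iff π).mp h2)

variable {π}

lemma du_desc (hdu : DownUp π) (t : Fin n) : π (od t) < π (ev t) := by
  have h := hdu (ev t) (od t) (by simp only [ev, od])
  rwa [if_pos ⟨t.val, two_mul t.val⟩] at h

lemma du_asc (hdu : DownUp π) {t : Fin n} (h : (t : ℕ) + 1 < n) :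
    π (od t) < π (ev ⟨t + 1, h⟩) := by
  have h2 := hdu (od t) (ev ⟨t + 1, h⟩) (by simp only [ev, od]; omega)
  rwa [if_neg (by simp only [od, Nat.even_iff]; omega)] at h2

lemma ev_strictMono (hav : Avoids312 π) (hdu : DownUp π) :
    StrictMono (fun t : Fin n => π (ev t)) := by
  apply strictMono_adj
  intro i hi
  set a : Fin n := ⟨i, Nat.lt_of_succ_lt hi⟩ with ha
  set b : Fin n := ⟨i + 1, hi⟩ with hb
  have h2 : π (od a) < π (ev b) := du_asc hdu (show (a : ℕ) + 1 < n from hi)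
  by_contra hc
  push_neg at hc
  have hne : π (ev b) ≠ π (ev a) := by
    intro he
    have := ev_injective (π.injective he)
    rw [ha, hb] at this
    simp only [Fin.mk.injEq] at this
    omega
  have hlt : π (ev b) < π (ev a) := lt_of_le_of_ne hc hne
  have p1 : ev a < od a := by rw [Fin.lt_def]; simp only [ev, od]; omega
  have p2 : od a < ev b := by rw [Fin.lt_def]; simp only [ev, od, ha, hb]; omega
  exact av_elim hav p1 p2 h2 hlt

lemma key_E (hav : Avoids312 π) (hdu : DownUp π) (t : Fin n) :
    (π (od t) : ℕ) = Eval (sigma0 π) t := by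
  have h0 := card_lt_val π (π (od t))
  rw [card_split (fun p => π p < π (od t))] at h0
  have hfirst : (univ.filter fun u => π (ev u) < π (od t)) =
      (univ.filter fun u => u < t ∧ sigma0 π u < sigma0 π t) := by
    ext u
    simp only [mem_filter, mem_univ, true_and]
    constructor
    · intro h
      have h1 : π (od u) < π (od t) := (du_desc hdu u).trans h
      have h2 : u < t := by
        have := (ev_strictMono hav hdu).lt_iff_lt.mp (h.trans (du_desc hdu t))
        exact this
      exact ⟨h2, (sigma0_lt_iff π).mpr h1⟩
    · rintro ⟨hut, hs⟩
      have hlt : π (od u) < π (od t) := (sigma0_lt_iff π).mp hs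
      by_contra hc
      push_neg at hc
      have hne : π (od t) ≠ π (ev u) := by
        intro he
        have := π.injective he
        have := congrArg Fin.val this
        simp only [ev, od] at this
        omega
      have p1 : ev u < od u := by rw [Fin.lt_def]; simp only [ev, od]; omega
      have p2 : od u < od t := by
        rw [Fin.lt_def]; simp only [od]
        have : (u : ℕ) < t := hut
        omega
      exact av_elim hav p1 p2 hlt (lt_of_le_of_ne hc hne)
  rw [hfirst] at h0
  have hsec : (univ.filter fun u => π (od u) < π (od t)).card = gcnt π t := rfl
  rw [hsec] at h0
  have hcnt : cntE (sigma0 π) t = (univ.filter fun u => u < t ∧ sigma0 π u < sigma0 π t).card := rfl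
  have hg : (sigma0 π t : ℕ) = gcnt π t := rfl
  rw [Eval, hcnt, hg]
  omega

lemma key_O (hav : Avoids312 π) (hdu : DownUp π) (t : Fin n) :
    (π (ev t) : ℕ) = Oval (sigma0 π) t := by
  have h0 := card_lt_val π (π (ev t))
  rw [card_split (fun p => π p < π (ev t))] at h0
  have hfirst : (univ.filter fun u => π (ev u) < π (ev t)) =
      (univ.filter fun u => u < t) := by
    ext u
    simp only [mem_filter, mem_univ, true_and]
    exact (ev_strictMono hav hdu).lt_iff_lt
  have hsec : (univ.filter fun u => π (od u) < π (ev t)) =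
      (univ.filter fun u => u ≤ t) ∪
        (univ.filter fun u => t < u ∧ sigma0 π u < sigma0 π t) := by
    ext u
    simp only [mem_filter, mem_union, mem_univ, true_and]
    constructor
    · intro h
      rcases le_or_gt u t with h1 | h1
      · exact Or.inl h1
      · refine Or.inr ⟨h1, (sigma0_lt_iff π).mpr ?_⟩
        rcases lt_trichotomy (π (od u)) (π (od t)) with h2 | h2 | h2
        · exact h2
        · rw [od_injective (π.injective h2)] at h1; exact absurd h1 (lt_irrefl _)
        · exfalso
          have p1 : ev t < od t := by rw [Fin.lt_def]; simp only [ev, od]; omega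
          have p2 : od t < od u := by
            rw [Fin.lt_def]; simp only [od]
            have : (t : ℕ) < u := h1
            omega
          exact av_elim hav p1 p2 h2 h
    · rintro (h1 | ⟨h1, h2⟩)
      · exact (du_desc hdu u).trans_le ((ev_strictMono hav hdu).monotone h1)
      · exact ((sigma0_lt_iff π).mp h2).trans (du_desc hdu t)
  have hdisj : Disjoint (univ.filter fun u : Fin n => u ≤ t)
      (univ.filter fun u : Fin n => t < u ∧ sigma0 π u < sigma0 π t) := by
    rw [Finset.disjoint_left]
    intro u hu1 hu2
    simp only [mem_filter, mem_univ, true_and] at hu1 hu2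
    exact absurd (lt_of_le_of_lt hu1 hu2.1) (lt_irrefl u)
  rw [hfirst, hsec, Finset.card_union_of_disjoint hdisj, card_filter_lt, card_filter_le] at h0
  have hbr := Msup_eq (sigma0_avoids π hav) t
  rw [Oval, hbr]
  omega

lemma Pi_sigma0 (hav : Avoids312 π) (hdu : DownUp π) :
    Pi (sigma0 π) (sigma0_avoids π hav) = π := by
  apply Equiv.ext
  intro p
  rcases ev_or_od p with ⟨t, rfl⟩ | ⟨t, rfl⟩
  · rw [Pi_ev]
    exact Fin.ext (key_O hav hdu t).symm
  · rw [Pi_od]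
    exact Fin.ext (key_E hav hdu t).symm

end Inverse

end Av312x

/-- **Corollary (Lewis).** For every `n ≥ 1`, the number of alternating (down-up)
312-avoiding permutations of `{1,…,2n}` equals the number of 312-avoiding
permutations of `{1,…,n}`. -/
theorem card_downUp_avoids312_eq_card_avoids312 (n : ℕ) (hn : 1 ≤ n) :
    Nat.card {π : Equiv.Perm (Fin (2 * n)) // Avoids312 π ∧ DownUp π} =
      Nat.card {π : Equiv.Perm (Fin n) // Avoids312 π} := by
  have hbij : Function.Bijective
      (fun s : {σ : Equiv.Perm (Fin n) // Avoids312 σ} =>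
        (⟨Av312x.Pi s.1 s.2, Av312x.Pi_avoids s.2, Av312x.Pi_downUp s.2⟩ :
          {π : Equiv.Perm (Fin (2 * n)) // Avoids312 π ∧ DownUp π})) := by
    constructor
    · rintro ⟨σ, hσ⟩ ⟨σ', hσ'⟩ h
      simp only [Subtype.mk.injEq] at h
      apply Subtype.ext
      apply Av312x.perm_eq_of_order_iso
      intro t u
      have hE : ∀ w : Fin n, Av312x.Eval σ w = Av312x.Eval σ' w := by
        intro w
        have := congrArg (fun (e : Equiv.Perm (Fin (2*n))) => e (Av312x.od w)) h
        rw [show Av312x.Pi σ hσ (Av312x.od w) = Av312x.EvalF σ w from Av312x.Pi_od hσ w,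
          show Av312x.Pi σ' hσ' (Av312x.od w) = Av312x.EvalF σ' w from Av312x.Pi_od hσ' w] at this
        exact congrArg Fin.val this
      rw [← Av312x.Eval_lt_iff hσ, ← Av312x.Eval_lt_iff hσ', hE t, hE u]
    · rintro ⟨π, hav, hdu⟩
      refine ⟨⟨Av312x.sigma0 π, Av312x.sigma0_avoids π hav⟩, ?_⟩
      apply Subtype.ext
      exact Av312x.Pi_sigma0 hav hdu
  exact (Nat.card_congr (Equiv.ofBijective _ hbij)).symm
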